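/- Let A ∈ ℝ^{m×m} and B : ℕ → ℝ^{m×m} with A + B(t) invertible for all t. Suppose ‖A^k‖ ≤ C·exp(−α k) for all k ≥ 0, with C ≥ 1 and α > 0. Then any solution of x(t+1) = (A + B(t)) x(t) satisfies |x(t)| ≤ C·|x(0)|·exp(−α t + C·exp(α)·∑_{τ=0}^{t−1} ‖B(τ)‖) for all t ∈ ℕ. -/
import Mathlib

private lemma prodid (a : ℕ → ℝ) :
    ∀ n : ℕ, 1 + ∑ τ ∈ Finset.range n, a τ * ∏ s ∈ Finset.range τ, (1 + a s)
      = ∏ s ∈ Finset.range n, (1 + a s) := by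
  intro n
  induction n with
  | zero => simp
  | succ n ih =>
    rw [Finset.sum_range_succ, Finset.prod_range_succ, ← ih]; ring

theorem stmt_1 (m : ℕ)
    (A : EuclideanSpace ℝ (Fin m) →L[ℝ] EuclideanSpace ℝ (Fin m))
    (B : ℕ → (EuclideanSpace ℝ (Fin m) →L[ℝ] EuclideanSpace ℝ (Fin m)))
    (hinv : ∀ t : ℕ, IsUnit (A + B t))
    (C α : ℝ) (hC : 1 ≤ C) (hα : 0 < α)
    (hA : ∀ k : ℕ, ‖A ^ k‖ ≤ C * Real.exp (-α * k))
    (x : ℕ → EuclideanSpace ℝ (Fin m))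
    (hx : ∀ t : ℕ, x (t + 1) = (A + B t) (x t)) :
    ∀ t : ℕ,
      ‖x t‖ ≤ C * ‖x 0‖ *
        Real.exp (-α * t + C * Real.exp α * ∑ τ ∈ Finset.range t, ‖B τ‖) := by
  set a : ℝ := C * Real.exp α with ha
  have ha0 : 0 < a := by positivity
  -- variation of constants
  have voc : ∀ t : ℕ, x t = (A ^ t) (x 0)
      + ∑ τ ∈ Finset.range t, (A ^ (t - 1 - τ)) ((B τ) (x τ)) := by
    intro t
    induction t with
    | zero => simp
    | succ n ih =>
      have h1 : x (n + 1) = A (x n) + (B n) (x n) := by rw [hx n]; rfl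
      have hAx : A (x n) = (A ^ (n + 1)) (x 0)
          + ∑ τ ∈ Finset.range n, (A ^ (n - τ)) ((B τ) (x τ)) := by
        rw [ih, map_add, map_sum]
        congr 1
        · rw [pow_succ']; rfl
        · refine Finset.sum_congr rfl fun τ hτ => ?_
          have hτn := Finset.mem_range.mp hτ
          have : n - τ = (n - 1 - τ) + 1 := by omega
          rw [this, pow_succ']; rfl
      rw [h1, hAx, Finset.sum_range_succ]
      simp [Nat.succ_sub_one, add_assoc]
  -- key Grönwall bound
  have key : ∀ t : ℕ, ‖x t‖ ≤ C * Real.exp (-α * t) * ‖x 0‖ *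
      ∏ s ∈ Finset.range t, (1 + a * ‖B s‖) := by
    intro t
    induction t using Nat.strong_induction_on with
    | _ t ih =>
      match t with
      | 0 =>
        simp only [Finset.range_zero, Finset.prod_empty, Nat.cast_zero, mul_zero,
          mul_one, neg_zero, zero_mul, Real.exp_zero]
        nlinarith [norm_nonneg (x 0)]
      | n + 1 =>
        push_cast
        have hxb : ‖x (n + 1)‖ ≤ ‖A ^ (n + 1)‖ * ‖x 0‖
            + ∑ τ ∈ Finset.range (n + 1), ‖A ^ (n - τ)‖ * (‖B τ‖ * ‖x τ‖) := by
          rw [voc (n + 1)]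
          refine (norm_add_le _ _).trans (add_le_add ((A ^ (n+1)).le_opNorm _) ?_)
          refine (norm_sum_le _ _).trans (Finset.sum_le_sum fun τ hτ => ?_)
          have : n + 1 - 1 - τ = n - τ := by omega
          rw [this]
          exact ((A ^ (n - τ)).le_opNorm _).trans
            (by gcongr; exact (B τ).le_opNorm _)
        have step : ∀ τ ∈ Finset.range (n + 1),
            ‖A ^ (n - τ)‖ * (‖B τ‖ * ‖x τ‖)
              ≤ C * Real.exp (-α * ((n:ℝ) + 1)) * ‖x 0‖ *
                (a * ‖B τ‖ * ∏ s ∈ Finset.range τ, (1 + a * ‖B s‖)) := by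
          intro τ hτ
          have hτn : τ ≤ n := Nat.lt_succ_iff.mp (Finset.mem_range.mp hτ)
          have h1 := hA (n - τ)
          have h2 := ih τ (by omega)
          have hcast : ((n - τ : ℕ) : ℝ) = (n : ℝ) - τ := by
            push_cast [Nat.cast_sub hτn]; ring
          rw [hcast] at h1
          have hB0 : (0:ℝ) ≤ ‖B τ‖ := norm_nonneg _
          have hP : (0:ℝ) ≤ ∏ s ∈ Finset.range τ, (1 + a * ‖B s‖) :=
            Finset.prod_nonneg fun i _ => by positivity
          have hE : Real.exp (-α * ((n:ℝ) - τ)) * Real.exp (-α * τ)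
              = Real.exp α * Real.exp (-α * ((n:ℝ) + 1)) := by
            rw [← Real.exp_add, ← Real.exp_add]; ring_nf
          calc ‖A ^ (n - τ)‖ * (‖B τ‖ * ‖x τ‖)
              ≤ (C * Real.exp (-α * ((n:ℝ) - τ))) * (‖B τ‖ *
                (C * Real.exp (-α * τ) * ‖x 0‖ * ∏ s ∈ Finset.range τ, (1 + a * ‖B s‖))) :=
                mul_le_mul h1 (mul_le_mul_of_nonneg_left h2 hB0)
                  (by positivity) (by positivity)
            _ = C * Real.exp (-α * ((n:ℝ) + 1)) * ‖x 0‖ *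
                (a * ‖B τ‖ * ∏ s ∈ Finset.range τ, (1 + a * ‖B s‖)) := by
                simp only [ha]
                linear_combination (C * ‖B τ‖ * C * ‖x 0‖ *
                  (∏ s ∈ Finset.range τ, (1 + C * Real.exp α * ‖B s‖))) * hE
        have hsum := Finset.sum_le_sum step
        have hfirst : ‖A ^ (n + 1)‖ * ‖x 0‖
            ≤ C * Real.exp (-α * ((n:ℝ) + 1)) * ‖x 0‖ := by
          have h := hA (n + 1)
          push_cast at h
          exact mul_le_mul_of_nonneg_right h (norm_nonneg _)
        calc ‖x (n + 1)‖ ≤ _ := hxb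
          _ ≤ C * Real.exp (-α * ((n:ℝ) + 1)) * ‖x 0‖
              + ∑ τ ∈ Finset.range (n + 1), C * Real.exp (-α * ((n:ℝ) + 1)) * ‖x 0‖ *
                (a * ‖B τ‖ * ∏ s ∈ Finset.range τ, (1 + a * ‖B s‖)) :=
              add_le_add hfirst hsum
          _ = C * Real.exp (-α * ((n:ℝ) + 1)) * ‖x 0‖ *
              (1 + ∑ τ ∈ Finset.range (n + 1), (fun s => a * ‖B s‖) τ *
                ∏ s ∈ Finset.range τ, (1 + (fun s => a * ‖B s‖) s)) := by
              rw [← Finset.mul_sum]; ring_nf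
          _ = C * Real.exp (-α * ((n:ℝ) + 1)) * ‖x 0‖ *
              ∏ s ∈ Finset.range (n + 1), (1 + a * ‖B s‖) := by
              rw [prodid (fun s => a * ‖B s‖)]
  intro t
  have hk := key t
  have hp : ∏ s ∈ Finset.range t, (1 + a * ‖B s‖)
      ≤ Real.exp (a * ∑ τ ∈ Finset.range t, ‖B τ‖) := by
    rw [Finset.mul_sum, Real.exp_sum]
    exact Finset.prod_le_prod (fun i _ => by positivity)
      (fun i _ => by linarith [Real.add_one_le_exp (a * ‖B i‖)])
  calc ‖x t‖ ≤ C * Real.exp (-α * t) * ‖x 0‖ *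
        Real.exp (a * ∑ τ ∈ Finset.range t, ‖B τ‖) := by
        exact hk.trans (mul_le_mul_of_nonneg_left hp (by positivity))
    _ = C * ‖x 0‖ * Real.exp (-α * t + a * ∑ τ ∈ Finset.range t, ‖B τ‖) := by
        rw [Real.exp_add]; ring
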